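/- Let d ≥ 2 be an even integer and n ≥ d + 1 an integer. Then the eccentric connectivity index of the volcano graph V_{n,d} equals nd + n + d²/2 − 2d − 1. -/

import Mathlib

/-- The eccentricity of a vertex `v` in a finite graph `G`:
the maximum distance from `v` to any vertex of `G`. -/
noncomputable def SimpleGraph.ecc {V : Type*} [Fintype V] (G : SimpleGraph V) (v : V) : ℕ :=
  Finset.univ.sup fun u => G.dist v u

/-- The eccentric connectivity index of a finite graph `G`:
`ξ^c(G) = ∑_{v ∈ V(G)} ε(v) · d(v)`. -/
noncomputable def SimpleGraph.eci {V : Type*} [Fintype V] (G : SimpleGraph V) : ℕ :=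
  ∑ v, G.ecc v * Nat.card (G.neighborSet v)


/-- For even `d`, the volcano graph `V_{n,d}` on vertex set `Fin n`: vertices
`0, 1, …, d` form a path, and each of the remaining `n − d − 1` vertices is
joined to the unique central vertex `d/2` of the path. -/
def volcanoEven (n d : ℕ) : SimpleGraph (Fin n) :=
  SimpleGraph.fromRel fun u v =>
    (u.val + 1 = v.val ∧ v.val ≤ d) ∨ (d < u.val ∧ v.val = d / 2)

open SimpleGraph Finset

lemma volcano_adj {n d : ℕ} (u v : Fin n) : (volcanoEven n d).Adj u v ↔ u ≠ v ∧
    ((u.val + 1 = v.val ∧ v.val ≤ d) ∨ (v.val + 1 = u.val ∧ u.val ≤ d) ∨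
     (d < u.val ∧ v.val = d/2) ∨ (d < v.val ∧ u.val = d/2)) := by
  simp only [volcanoEven, SimpleGraph.fromRel_adj]
  tauto

lemma potential_le {V : Type*} {G : SimpleGraph V} (f : V → ℤ)
    (hf : ∀ u v, G.Adj u v → |f u - f v| ≤ 1) {u v : V} (p : G.Walk u v) :
    |f u - f v| ≤ p.length := by
  induction p with
  | nil => simp
  | @cons a b c h p ih =>
    calc |f a - f c| ≤ |f a - f b| + |f b - f c| := abs_sub_le _ _ _
    _ ≤ 1 + p.length := add_le_add (hf _ _ h) ih
    _ = (SimpleGraph.Walk.cons h p).length := by simp [SimpleGraph.Walk.length_cons]; ring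

lemma path_walk {n d : ℕ} : ∀ (k : ℕ) (u v : Fin n), v.val ≤ d → u.val + k = v.val →
    ∃ p : (volcanoEven n d).Walk u v, p.length = k := by
  intro k
  induction k with
  | zero =>
    intro u v hv h
    have : u = v := Fin.ext (by omega)
    subst this; exact ⟨.nil, rfl⟩
  | succ k ih =>
    intro u v hv h
    have hu1 : u.val + 1 < n := by omega
    have ha : (volcanoEven n d).Adj u ⟨u.val + 1, hu1⟩ := by
      rw [volcano_adj]
      exact ⟨by simp [Fin.ext_iff], Or.inl ⟨rfl, show u.val + 1 ≤ d by omega⟩⟩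
    obtain ⟨p, hp⟩ := ih ⟨u.val + 1, hu1⟩ v hv (by simp only [Fin.val_mk]; omega)
    exact ⟨.cons ha p, by simp [hp]⟩

lemma dist_lower {V : Type*} {G : SimpleGraph V} (f : V → ℤ)
    (hf : ∀ u v, G.Adj u v → |f u - f v| ≤ 1) {u v : V} (h : G.Reachable u v) :
    |f u - f v| ≤ G.dist u v := by
  obtain ⟨p, hp⟩ := h.exists_walk_length_eq_dist
  rw [← hp]; exact potential_le f hf p

lemma f1_lip {n d : ℕ} : ∀ u v : Fin n, (volcanoEven n d).Adj u v →
    |(if u.val ≤ d then (u.val : ℤ) else (d/2 : ℕ)) - (if v.val ≤ d then (v.val : ℤ) else (d/2 : ℕ))| ≤ 1 := by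
  intro u v h
  rw [volcano_adj] at h
  obtain ⟨-, h⟩ := h
  rw [abs_sub_le_iff]
  split_ifs <;> push_cast <;> omega

lemma dist_path {n d : ℕ} {u v : Fin n} (hu : u.val ≤ d) (hv : v.val ≤ d)
    (hle : u.val ≤ v.val) : (volcanoEven n d).dist u v = v.val - u.val := by
  obtain ⟨p, hp⟩ := path_walk (v.val - u.val) u v hv (by omega)
  have hup : (volcanoEven n d).dist u v ≤ v.val - u.val := hp ▸ SimpleGraph.dist_le p
  have hlow := dist_lower _ (f1_lip (n := n) (d := d)) ⟨p⟩
  simp only [hu, hv, if_pos] at hlow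
  rw [abs_le] at hlow
  omega

lemma path_walk' {n d : ℕ} (u v : Fin n) (hu : u.val ≤ d) (hv : v.val ≤ d) :
    ∃ p : (volcanoEven n d).Walk u v, p.length = (v.val - u.val) + (u.val - v.val) := by
  rcases le_total u.val v.val with h | h
  · obtain ⟨p, hp⟩ := path_walk (v.val - u.val) u v hv (by omega)
    exact ⟨p, by omega⟩
  · obtain ⟨p, hp⟩ := path_walk (u.val - v.val) v u hu (by omega)
    exact ⟨p.reverse, by simp [hp]; omega⟩

lemma dist_path' {n d : ℕ} {u v : Fin n} (hu : u.val ≤ d) (hv : v.val ≤ d) :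
    (volcanoEven n d).dist u v = (v.val - u.val) + (u.val - v.val) := by
  rcases le_total u.val v.val with h | h
  · rw [dist_path hu hv h]; omega
  · rw [SimpleGraph.dist_comm, dist_path hv hu h]; omega

lemma adj_center {n d : ℕ} {s : Fin n} (hdn : d < n) (hs : d < s.val) :
    (volcanoEven n d).Adj s ⟨d/2, by omega⟩ := by
  rw [volcano_adj]
  refine ⟨by simp [Fin.ext_iff]; omega, Or.inr (Or.inr (Or.inl ⟨hs, rfl⟩))⟩

lemma ft_lip {n d : ℕ} (t : ℤ) (ht : |((d/2 : ℕ) : ℤ) - t| ≤ 1) :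
    ∀ u v : Fin n, (volcanoEven n d).Adj u v →
    |(if u.val ≤ d then (u.val : ℤ) else t) - (if v.val ≤ d then (v.val : ℤ) else t)| ≤ 1 := by
  intro u v h
  rw [volcano_adj] at h
  obtain ⟨-, h⟩ := h
  rw [abs_sub_le_iff] at ht ⊢
  split_ifs <;> push_cast <;> omega

lemma dist_s_path {n d : ℕ} {s v : Fin n} (hs : d < s.val) (hv : v.val ≤ d) :
    (volcanoEven n d).dist s v = (d/2 - v.val) + (v.val - d/2) + 1 := by
  have hdn : d < n := lt_of_lt_of_le hs (le_of_lt s.isLt)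
  obtain ⟨p, hp⟩ := path_walk' (n := n) (d := d) ⟨d/2, by omega⟩ v (by simp; omega) hv
  obtain ⟨w, hw⟩ : ∃ w : (volcanoEven n d).Walk s v,
      w.length = (d/2 - v.val) + (v.val - d/2) + 1 :=
    ⟨SimpleGraph.Walk.cons (adj_center hdn hs) p,
      by simp only [SimpleGraph.Walk.length_cons, hp, Fin.val_mk]; omega⟩
  have hup : (volcanoEven n d).dist s v ≤ (d/2 - v.val) + (v.val - d/2) + 1 :=
    hw ▸ SimpleGraph.dist_le w
  rcases le_or_gt v.val (d/2) with hc | hc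
  · have hlow := dist_lower _ (ft_lip (n := n) (d := d) ((d/2 : ℕ) + 1)
      (by rw [abs_sub_le_iff]; omega)) ⟨w⟩
    simp only [if_neg (by omega : ¬ s.val ≤ d), if_pos hv] at hlow
    rw [abs_le] at hlow
    omega
  · have hlow := dist_lower _ (ft_lip (n := n) (d := d) ((d/2 : ℕ) - 1)
      (by rw [abs_sub_le_iff]; omega)) ⟨w⟩
    simp only [if_neg (by omega : ¬ s.val ≤ d), if_pos hv] at hlow
    rw [abs_le] at hlow
    omega

lemma dist_s_s {n d : ℕ} {s t : Fin n} (hs : d < s.val) (ht : d < t.val) (hne : s ≠ t) :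
    (volcanoEven n d).dist s t = 2 := by
  have hdn : d < n := lt_of_lt_of_le hs (le_of_lt s.isLt)
  obtain ⟨w, hw⟩ : ∃ w : (volcanoEven n d).Walk s t, w.length = 2 :=
    ⟨SimpleGraph.Walk.cons (adj_center hdn hs) ((adj_center hdn ht).symm.toWalk), by simp⟩
  have hup : (volcanoEven n d).dist s t ≤ 2 := hw ▸ SimpleGraph.dist_le w
  have h0 : (volcanoEven n d).dist s t ≠ 0 :=
    fun e => hne ((SimpleGraph.Reachable.dist_eq_zero_iff ⟨w⟩).mp e)
  have h1 : (volcanoEven n d).dist s t ≠ 1 := by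
    intro e
    have := SimpleGraph.dist_eq_one_iff_adj.mp e
    rw [volcano_adj] at this
    obtain ⟨-, this⟩ := this
    omega
  omega

lemma ecc_path {n d : ℕ} (hd2 : 2 ≤ d) (hde : Even d) (hn : d + 1 ≤ n) {v : Fin n}
    (hv : v.val ≤ d) : (volcanoEven n d).ecc v = max v.val (d - v.val) := by
  obtain ⟨m, hm⟩ := hde
  have h0n : 0 < n := by omega
  have hdn : d < n := by omega
  unfold SimpleGraph.ecc
  apply le_antisymm
  · apply Finset.sup_le
    intro u _
    rcases le_or_gt u.val d with hu | hu
    · rw [dist_path' hv hu]; omega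
    · rw [SimpleGraph.dist_comm, dist_s_path hu hv]; omega
  · have e0 := dist_path' (n := n) (d := d) (u := v) (v := ⟨0, h0n⟩) hv (Nat.zero_le d)
    have ed := dist_path' (n := n) (d := d) (u := v) (v := ⟨d, hdn⟩) hv (le_refl d)
    have h0 := Finset.le_sup (f := fun u => (volcanoEven n d).dist v u)
      (Finset.mem_univ (⟨0, h0n⟩ : Fin n))
    have hd := Finset.le_sup (f := fun u => (volcanoEven n d).dist v u)
      (Finset.mem_univ (⟨d, hdn⟩ : Fin n))
    rw [e0] at h0
    rw [ed] at hd
    simp only [Fin.val_mk] at h0 hd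
    omega

lemma ecc_s {n d : ℕ} (hd2 : 2 ≤ d) (hde : Even d) {s : Fin n} (hs : d < s.val) :
    (volcanoEven n d).ecc s = d / 2 + 1 := by
  obtain ⟨m, hm⟩ := hde
  have h0n : 0 < n := by omega
  unfold SimpleGraph.ecc
  apply le_antisymm
  · apply Finset.sup_le
    intro u _
    rcases le_or_gt u.val d with hu | hu
    · rw [dist_s_path hs hu]; omega
    · rcases eq_or_ne s u with rfl | hne
      · rw [SimpleGraph.dist_self]; omega
      · rw [dist_s_s hs hu hne]; omega
  · have e0 := dist_s_path (n := n) (d := d) (v := ⟨0, h0n⟩) hs (Nat.zero_le d)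
    have h0 := Finset.le_sup (f := fun u => (volcanoEven n d).dist s u)
      (Finset.mem_univ (⟨0, h0n⟩ : Fin n))
    rw [e0] at h0
    simp only [Fin.val_mk] at h0
    omega

lemma card_filter_gt {n d : ℕ} : (Finset.univ.filter fun x : Fin n => d < x.val).card
    = n - (d + 1) := by
  rw [← Nat.card_Ico (d + 1) n]
  apply Finset.card_bij (fun (x : Fin n) _ => x.val)
  · intro a ha
    simp only [Finset.mem_filter] at ha
    exact Finset.mem_Ico.mpr ⟨by omega, a.isLt⟩
  · intro a _ b _ h
    exact Fin.ext h
  · intro b hb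
    rw [Finset.mem_Ico] at hb
    exact ⟨⟨b, hb.2⟩, Finset.mem_filter.mpr ⟨Finset.mem_univ _, hb.1⟩, rfl⟩

lemma deg_end0 {n d : ℕ} (hd2 : 2 ≤ d) (hn : d + 1 ≤ n) {v : Fin n} (hv : v.val = 0) :
    Nat.card ((volcanoEven n d).neighborSet v) = 1 := by
  have h1 : (volcanoEven n d).neighborSet v = {(⟨1, by omega⟩ : Fin n)} := by
    ext x
    simp only [SimpleGraph.mem_neighborSet, volcano_adj, Set.mem_singleton_iff, Fin.ext_iff,
      ne_eq, Fin.val_mk]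
    omega
  rw [h1, Nat.card_coe_set_eq, Set.ncard_singleton]

lemma deg_endd {n d : ℕ} (hd2 : 2 ≤ d) (hde : Even d) (hn : d + 1 ≤ n) {v : Fin n}
    (hv : v.val = d) : Nat.card ((volcanoEven n d).neighborSet v) = 1 := by
  obtain ⟨m, hm⟩ := hde
  have h1 : (volcanoEven n d).neighborSet v = {(⟨d - 1, by omega⟩ : Fin n)} := by
    ext x
    simp only [SimpleGraph.mem_neighborSet, volcano_adj, Set.mem_singleton_iff, Fin.ext_iff,
      ne_eq, Fin.val_mk]
    omega
  rw [h1, Nat.card_coe_set_eq, Set.ncard_singleton]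

lemma deg_mid {n d : ℕ} (hde : Even d) (hn : d + 1 ≤ n) {v : Fin n} (h0 : 0 < v.val) (hvd : v.val < d)
    (hvm : v.val ≠ d / 2) : Nat.card ((volcanoEven n d).neighborSet v) = 2 := by
  obtain ⟨m, hm⟩ := hde
  have h1 : (volcanoEven n d).neighborSet v =
      {(⟨v.val - 1, by omega⟩ : Fin n), (⟨v.val + 1, by omega⟩ : Fin n)} := by
    ext x
    simp only [SimpleGraph.mem_neighborSet, volcano_adj, Set.mem_insert_iff,
      Set.mem_singleton_iff, Fin.ext_iff, ne_eq, Fin.val_mk]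
    omega
  rw [h1, Nat.card_coe_set_eq]
  rw [Set.ncard_pair (by simp only [ne_eq, Fin.ext_iff, Fin.val_mk]; omega)]

lemma deg_s {n d : ℕ} (hd2 : 2 ≤ d) {v : Fin n} (hv : d < v.val) :
    Nat.card ((volcanoEven n d).neighborSet v) = 1 := by
  have hdn : d < n := lt_of_lt_of_le hv (le_of_lt v.isLt)
  have h1 : (volcanoEven n d).neighborSet v = {(⟨d / 2, by omega⟩ : Fin n)} := by
    ext x
    simp only [SimpleGraph.mem_neighborSet, volcano_adj, Set.mem_singleton_iff, Fin.ext_iff,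
      ne_eq, Fin.val_mk]
    omega
  rw [h1, Nat.card_coe_set_eq, Set.ncard_singleton]

lemma deg_center {n d : ℕ} (hd2 : 2 ≤ d) (hde : Even d) (hn : d + 1 ≤ n) {v : Fin n}
    (hv : v.val = d / 2) : Nat.card ((volcanoEven n d).neighborSet v) = n - (d + 1) + 2 := by
  obtain ⟨m, hm⟩ := hde
  have h1 : (volcanoEven n d).neighborSet v =
      ↑(insert (⟨d / 2 - 1, by omega⟩ : Fin n) (insert (⟨d / 2 + 1, by omega⟩ : Fin n)
        (Finset.univ.filter fun x : Fin n => d < x.val))) := by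
    ext x
    simp only [SimpleGraph.mem_neighborSet, volcano_adj, Finset.coe_insert, Set.mem_insert_iff,
      Finset.mem_coe, Finset.mem_filter, Finset.mem_univ, true_and, Fin.ext_iff, ne_eq,
      Fin.val_mk]
    omega
  rw [h1, Nat.card_coe_set_eq, Set.ncard_coe_finset]
  rw [Finset.card_insert_of_notMem (by
      simp only [Finset.mem_insert, Finset.mem_filter, Finset.mem_univ, true_and, Fin.ext_iff,
        Fin.val_mk]
      omega),
    Finset.card_insert_of_notMem (by
      simp only [Finset.mem_filter, Finset.mem_univ, true_and, Fin.val_mk]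
      omega), card_filter_gt]

lemma T_nat (m : ℕ) : ∑ k ∈ Finset.range (2*m+1), max k (2*m - k) = 3*m*m + 2*m := by
  have hsplit : (∑ k ∈ Finset.range (m+1), max k (2*m - k)) +
      (∑ k ∈ Finset.Ico (m+1) (2*m+1), max k (2*m - k)) =
      ∑ k ∈ Finset.range (2*m+1), max k (2*m - k) := by
    rw [Finset.range_eq_Ico, Finset.range_eq_Ico]
    exact Finset.sum_Ico_consecutive _ (by omega) (by omega)
  have h1 : ∑ k ∈ Finset.range (m+1), max k (2*m - k) = (m+1)*m + ∑ k ∈ Finset.range (m+1), k := by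
    have e1 : ∑ k ∈ Finset.range (m+1), max k (2*m - k) = ∑ k ∈ Finset.range (m+1), (2*m - k) :=
      Finset.sum_congr rfl fun k hk => by
        rw [Finset.mem_range] at hk; exact max_eq_right (by omega)
    have e2 : ∑ j ∈ Finset.range (m+1), (2*m - (m + 1 - 1 - j)) = ∑ k ∈ Finset.range (m+1), (2*m - k) :=
      Finset.sum_range_reflect (fun k => 2*m - k) (m+1)
    have e3 : ∑ j ∈ Finset.range (m+1), (2*m - (m + 1 - 1 - j)) = ∑ j ∈ Finset.range (m+1), (m + j) :=
      Finset.sum_congr rfl fun j hj => by rw [Finset.mem_range] at hj; omega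
    rw [e1, ← e2, e3, Finset.sum_add_distrib, Finset.sum_const, Finset.card_range, smul_eq_mul]
  have h2 : ∑ k ∈ Finset.Ico (m+1) (2*m+1), max k (2*m - k) = ∑ k ∈ Finset.Ico (m+1) (2*m+1), k :=
    Finset.sum_congr rfl fun k hk => by
      rw [Finset.mem_Ico] at hk; exact max_eq_left (by omega)
  have h4 : (∑ k ∈ Finset.range (m+1), k) + (∑ k ∈ Finset.Ico (m+1) (2*m+1), k) =
      ∑ k ∈ Finset.range (2*m+1), k := by
    rw [Finset.range_eq_Ico, Finset.range_eq_Ico]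
    exact Finset.sum_Ico_consecutive _ (by omega) (by omega)
  have gA := Finset.sum_range_id_mul_two (m+1)
  have gB := Finset.sum_range_id_mul_two (2*m+1)
  simp only [Nat.add_sub_cancel] at gA gB
  zify at *
  linarith [hsplit, h1, h2, h4, gA, gB]

def volF (n d k : ℕ) : ℕ :=
  if k = 0 ∨ k = d then d
  else if k = d / 2 then (d / 2) * (n - (d + 1) + 2)
  else if k ≤ d then 2 * max k (d - k)
  else d / 2 + 1

lemma vertex_val {n d : ℕ} (hd2 : 2 ≤ d) (hde : Even d) (hn : d + 1 ≤ n) (v : Fin n) :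
    (volcanoEven n d).ecc v * Nat.card ((volcanoEven n d).neighborSet v) = volF n d v.val := by
  obtain ⟨m, hm⟩ := id hde
  rcases lt_or_ge d v.val with hv | hv
  · rw [ecc_s hd2 hde hv, deg_s hd2 hv, volF,
      if_neg (by omega), if_neg (by omega), if_neg (by omega), mul_one]
  rcases eq_or_ne v.val 0 with h0 | h0
  · rw [ecc_path hd2 hde hn hv, deg_end0 hd2 hn h0, volF, if_pos (Or.inl h0), mul_one, h0]
    rw [max_eq_right (by omega), Nat.sub_zero]
  rcases eq_or_ne v.val d with hd | hd
  · rw [ecc_path hd2 hde hn hv, deg_endd hd2 hde hn hd, volF, if_pos (Or.inr hd), mul_one, hd]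
    rw [max_eq_left (by omega)]
  rcases eq_or_ne v.val (d / 2) with hc | hc
  · rw [ecc_path hd2 hde hn hv, deg_center hd2 hde hn hc, volF, if_neg (by omega), if_pos hc, hc]
    rw [max_eq_left (by omega)]
  · rw [ecc_path hd2 hde hn hv, deg_mid hde hn (by omega) (by omega) hc, volF,
      if_neg (by omega), if_neg hc, if_pos hv]
    ring

lemma sum_volF {n d m : ℕ} (hd2 : 2 ≤ d) (hm : d = 2 * m) (hn : d + 1 ≤ n) :
    ((∑ k ∈ Finset.range n, volF n d k : ℕ) : ℚ) = 2*m^2 + 2*m*n + n - 4*m - 1 := by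
  subst hm
  have hq : (2 * m) / 2 = m := by omega
  have hsplit : (∑ k ∈ Finset.range (2*m+1), volF n (2*m) k) +
      (∑ k ∈ Finset.Ico (2*m+1) n, volF n (2*m) k) = ∑ k ∈ Finset.range n, volF n (2*m) k := by
    rw [Finset.range_eq_Ico, Finset.range_eq_Ico]
    exact Finset.sum_Ico_consecutive _ (by omega) (by omega)
  have hIco : ∑ k ∈ Finset.Ico (2*m+1) n, volF n (2*m) k = (n - (2*m+1)) * (m+1) := by
    rw [Finset.sum_congr rfl (fun k hk => show volF n (2*m) k = m + 1 by
      rw [Finset.mem_Ico] at hk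
      rw [volF, if_neg (by omega), if_neg (by omega), if_neg (by omega), hq])]
    rw [Finset.sum_const, Nat.card_Ico, smul_eq_mul]
  set g : ℕ → ℕ := fun k => 2 * max k (2*m - k) with hg
  have hT : ∑ k ∈ Finset.range (2*m+1), g k = 2 * (3*m*m + 2*m) := by
    rw [hg, ← Finset.mul_sum, T_nat]
  -- erase chains
  have m0 : (0 : ℕ) ∈ Finset.range (2*m+1) := by simp
  have md : (2*m) ∈ (Finset.range (2*m+1)).erase 0 := by
    simp only [Finset.mem_erase, Finset.mem_range]; omega
  have mm : m ∈ ((Finset.range (2*m+1)).erase 0).erase (2*m) := by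
    simp only [Finset.mem_erase, Finset.mem_range]; omega
  have eF0 := Finset.add_sum_erase _ (volF n (2*m)) m0
  have eFd := Finset.add_sum_erase _ (volF n (2*m)) md
  have eFm := Finset.add_sum_erase _ (volF n (2*m)) mm
  have eg0 := Finset.add_sum_erase _ g m0
  have egd := Finset.add_sum_erase _ g md
  have egm := Finset.add_sum_erase _ g mm
  have hcong : ∑ k ∈ (((Finset.range (2*m+1)).erase 0).erase (2*m)).erase m, volF n (2*m) k
      = ∑ k ∈ (((Finset.range (2*m+1)).erase 0).erase (2*m)).erase m, g k := by
    apply Finset.sum_congr rfl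
    intro k hk
    simp only [Finset.mem_erase, Finset.mem_range] at hk
    rw [volF, if_neg (by omega), if_neg (by omega), if_pos (by omega), hg]
  -- values
  have vF0 : volF n (2*m) 0 = 2*m := by rw [volF, if_pos (Or.inl rfl)]
  have vFd : volF n (2*m) (2*m) = 2*m := by rw [volF, if_pos (Or.inr rfl)]
  have vFm : volF n (2*m) m = m * (n - (2*m+1) + 2) := by
    rw [volF, if_neg (by omega), if_pos hq.symm, hq]
  have vg0 : g 0 = 2 * (2*m) := by rw [hg]; simp
  have vgd : g (2*m) = 2 * (2*m) := by rw [hg]; simp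
  have vgm : g m = 2 * m := by
    rw [hg]; simp only; rw [max_eq_left (by omega)]
  rw [vF0] at eF0; rw [vFd] at eFd; rw [vFm] at eFm
  rw [vg0] at eg0; rw [vgd] at egd; rw [vgm] at egm
  rw [hcong] at eFm
  -- assemble over ℚ
  have hnn : (2*m+1 : ℕ) ≤ n := by omega
  qify [hnn] at eF0 eFd eFm eg0 egd egm hT
  rw [← hsplit, hIco]
  push_cast [Nat.cast_sub hnn]
  linear_combination (-1 : ℚ) * eF0 - eFd - eFm + egm + egd + eg0 + hT

/-- For an even integer `d ≥ 2` and `n ≥ d + 1`, the eccentric connectivity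
index of the volcano graph `V_{n,d}` equals `nd + n + d²/2 − 2d − 1`. -/
theorem eci_volcano_even (n d : ℕ) (hd2 : 2 ≤ d) (hde : Even d) (hn : d + 1 ≤ n) :
    ((volcanoEven n d).eci : ℚ) = n * d + n + d ^ 2 / 2 - 2 * d - 1 := by
  obtain ⟨m, hm⟩ := id hde
  have hm' : d = 2 * m := by omega
  have h2 : (volcanoEven n d).eci = ∑ k ∈ Finset.range n, volF n d k := by
    unfold SimpleGraph.eci
    rw [Finset.sum_congr rfl (fun v _ => vertex_val hd2 hde hn v)]
    exact Fin.sum_univ_eq_sum_range (volF n d) n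
  rw [h2, sum_volF hd2 hm' hn]
  subst hm'
  push_cast
  ring
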